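/- arXiv:2406.17653 — 2 statements merged into one kernel-verified Lean document; each statement's English description precedes it below -/
import Mathlib

section
/- For a graph in which every vertex has degree at most v, the number of connected subsets of vertices that contain a given vertex α and have exactly s vertices in total is at most (v·e)^{s-1}, where e is the base of the natural logarithm. -/
open Finset

lemma choosefact (n k : ℕ) : n.choose k * k.factorial ≤ n ^ k := by
  rw [mul_comm, ← Nat.descFactorial_eq_factorial_mul_choose]
  exact Nat.descFactorial_le_pow n k

lemma keyfact (k : ℕ) : ((k+1 : ℕ) : ℝ) ^ k ≤ Real.exp 1 ^ k * (Nat.factorial k) := by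
  induction k with
  | zero => simp
  | succ k ih =>
    have h1 : ((k+2:ℕ):ℝ) ^ (k+1) ≤ Real.exp 1 * ((k+1:ℕ):ℝ) ^ (k+1) := by
      have hpos : (0:ℝ) < ((k+1:ℕ):ℝ) := by positivity
      have he : ((k+2:ℕ):ℝ) = ((k+1:ℕ):ℝ) * (1 + 1/((k+1:ℕ):ℝ)) := by
        field_simp; push_cast; ring
      rw [he, mul_pow]
      have h2 : (1 + 1/((k+1:ℕ):ℝ)) ^ (k+1) ≤ Real.exp 1 := by
        have := Real.add_one_le_exp (1/((k+1:ℕ):ℝ))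
        calc (1 + 1/((k+1:ℕ):ℝ)) ^ (k+1) ≤ (Real.exp (1/((k+1:ℕ):ℝ)))^(k+1) := by
              apply pow_le_pow_left₀ (by positivity) (by linarith)
          _ = Real.exp 1 := by
              rw [← Real.exp_nat_mul]; congr 1; field_simp
      calc ((k+1:ℕ):ℝ)^(k+1) * (1 + 1/((k+1:ℕ):ℝ)) ^ (k+1)
          ≤ ((k+1:ℕ):ℝ)^(k+1) * Real.exp 1 := by
            apply mul_le_mul_of_nonneg_left h2 (by positivity)
        _ = Real.exp 1 * ((k+1:ℕ):ℝ)^(k+1) := by ring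
    calc ((k+2:ℕ):ℝ) ^ (k+1) ≤ Real.exp 1 * ((k+1:ℕ):ℝ) ^ (k+1) := h1
      _ = Real.exp 1 * (((k+1:ℕ):ℝ) ^ k * ((k+1:ℕ):ℝ)) := by ring
      _ ≤ Real.exp 1 * ((Real.exp 1 ^ k * (Nat.factorial k)) * ((k+1:ℕ):ℝ)) := by
          apply mul_le_mul_of_nonneg_left _ (Real.exp_pos 1).le
          apply mul_le_mul_of_nonneg_right ih (by positivity)
      _ = Real.exp 1 ^ (k+1) * ((Nat.factorial k) * ((k+1:ℕ):ℝ)) := by ring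
      _ = Real.exp 1 ^ (k+1) * (Nat.factorial (k+1)) := by
          congr 1; rw [Nat.factorial_succ]; push_cast; ring

lemma chooseReal (v s : ℕ) (hs : 1 ≤ s) :
    ((Nat.choose (s * v) (s-1)) : ℝ) ≤ ((v:ℝ) * Real.exp 1) ^ (s-1) := by
  obtain ⟨k, rfl⟩ : ∃ k, s = k + 1 := ⟨s - 1, (Nat.succ_pred_eq_of_pos hs).symm⟩
  simp only [Nat.add_sub_cancel]
  have hfpos : (0:ℝ) < (Nat.factorial k : ℝ) := by exact_mod_cast Nat.factorial_pos k
  have h1 : ((Nat.choose ((k+1) * v) k) : ℝ) * (Nat.factorial k) ≤ (((k+1) * v : ℕ) : ℝ) ^ k := by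
    rw [← Nat.cast_mul, ← Nat.cast_pow]
    exact_mod_cast choosefact ((k+1)*v) k
  have h2 : (((k+1) * v : ℕ) : ℝ) ^ k = ((k+1:ℕ):ℝ)^k * (v:ℝ)^k := by rw [Nat.cast_mul, mul_pow]
  have h3 : ((k+1:ℕ):ℝ)^k * (v:ℝ)^k ≤ (Real.exp 1 ^ k * (Nat.factorial k)) * (v:ℝ)^k :=
    mul_le_mul_of_nonneg_right (keyfact k) (by positivity)
  have h4 : ((Nat.choose ((k+1) * v) k) : ℝ) * (Nat.factorial k)
      ≤ ((v:ℝ) * Real.exp 1) ^ k * (Nat.factorial k) := by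
    calc ((Nat.choose ((k+1) * v) k) : ℝ) * (Nat.factorial k) ≤ (((k+1) * v : ℕ) : ℝ) ^ k := h1
      _ = ((k+1:ℕ):ℝ)^k * (v:ℝ)^k := h2
      _ ≤ (Real.exp 1 ^ k * (Nat.factorial k)) * (v:ℝ)^k := h3
      _ = ((v:ℝ) * Real.exp 1) ^ k * (Nat.factorial k) := by rw [mul_pow]; ring
  exact le_of_mul_le_mul_right h4 hfpos

namespace CCS

variable {V : Type*} [Fintype V] [DecidableEq V] [LinearOrder V]
variable (G : SimpleGraph V) [DecidableRel G.Adj]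

/-- rank of `y` among neighbors of `x` -/
def port (x y : V) : ℕ := ((G.neighborFinset x).filter (fun z => z < y)).card

lemma port_lt {x y : V} (h : y ∈ G.neighborFinset x) {v : ℕ} (hd : G.degree x ≤ v) :
    port G x y < v := by
  have h1 : (G.neighborFinset x).filter (fun z => z < y) ⊂ G.neighborFinset x := by
    refine Finset.ssubset_iff_of_subset (Finset.filter_subset _ _) |>.mpr ⟨y, h, ?_⟩
    simp
  have h0 := Finset.card_lt_card h1
  have h2 : (G.neighborFinset x).card = G.degree x := G.card_neighborFinset_eq_degree x
  have h3 : port G x y < G.degree x := by rw [port, ← h2]; exact h0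
  omega

lemma port_inj {x y y' : V} (hy : y ∈ G.neighborFinset x) (hy' : y' ∈ G.neighborFinset x)
    (h : port G x y = port G x y') : y = y' := by
  by_contra hne
  rcases lt_or_gt_of_ne hne with hlt | hlt
  · have hss : (G.neighborFinset x).filter (fun z => z < y) ⊂
        (G.neighborFinset x).filter (fun z => z < y') := by
      refine Finset.ssubset_iff_of_subset ?_ |>.mpr ⟨y, by simp [hy, hlt], by simp⟩
      intro z hz
      simp only [Finset.mem_filter] at hz ⊢
      exact ⟨hz.1, lt_trans hz.2 hlt⟩
    exact absurd h (Finset.card_lt_card hss).ne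
  · have hss : (G.neighborFinset x).filter (fun z => z < y') ⊂
        (G.neighborFinset x).filter (fun z => z < y) := by
      refine Finset.ssubset_iff_of_subset ?_ |>.mpr ⟨y', by simp [hy', hlt], by simp⟩
      intro z hz
      simp only [Finset.mem_filter] at hz ⊢
      exact ⟨hz.1, lt_trans hz.2 hlt⟩
    exact absurd h.symm (Finset.card_lt_card hss).ne

noncomputable def unport (x : V) (p : ℕ) : V :=
  if h : ((G.neighborFinset x).filter (fun y => port G x y = p)).Nonempty
  then ((G.neighborFinset x).filter (fun y => port G x y = p)).min' h else x

lemma unport_port {x y : V} (hy : y ∈ G.neighborFinset x) : unport G x (port G x y) = y := by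
  have hne : ((G.neighborFinset x).filter (fun z => port G x z = port G x y)).Nonempty :=
    ⟨y, by simp [hy]⟩
  rw [unport, dif_pos hne]
  have hm := Finset.min'_mem _ hne
  simp only [Finset.mem_filter] at hm
  exact port_inj G hm.1 hy hm.2

variable (α : V) (A : Finset V)

def frontierF (B : Finset V) : Finset V :=
  A.filter fun y => y ∉ B ∧ ∃ x ∈ B, G.Adj x y

noncomputable def nxt (B : Finset V) : V :=
  if h : (frontierF G A B).Nonempty then (frontierF G A B).min' h else α

noncomputable def pre : ℕ → Finset V
  | 0 => {α}
  | (i+1) => insert (nxt G α A (pre i)) (pre i)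

noncomputable def sq : ℕ → V
  | 0 => α
  | (i+1) => nxt G α A (pre G α A i)

lemma pre_eq_image (i : ℕ) : pre G α A i = (range (i+1)).image (CCS.sq G α A) := by
  induction i with
  | zero => simp [pre, sq]
  | succ i ih => rw [range_add_one, image_insert, ← ih]; rfl


lemma alpha_mem_pre (i : ℕ) : α ∈ pre G α A i := by
  induction i with
  | zero => simp [pre]
  | succ i ih => exact Finset.mem_insert_of_mem ih

section Conn
variable (hA : α ∈ A) (hconn : (G.induce (A : Set V)).Connected)
include hA hconn

lemma exists_cross {B : Finset V} (hBA : B ⊆ A) (hαB : α ∈ B)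
    (hne : (A \ B).Nonempty) : (frontierF G A B).Nonempty := by
  obtain ⟨y0, hy0⟩ := hne
  rw [Finset.mem_sdiff] at hy0
  have hy0A : (y0 : V) ∈ (A : Set V) := by exact_mod_cast hy0.1
  have hαA : (α : V) ∈ (A : Set V) := by exact_mod_cast hA
  obtain ⟨w⟩ := hconn.preconnected ⟨α, hαA⟩ ⟨y0, hy0A⟩
  suffices h : ∀ (u w : (A : Set V)) (p : (G.induce (A : Set V)).Walk u w),
      (u : V) ∈ B → (w : V) ∉ B → (frontierF G A B).Nonempty by
    exact h _ _ w hαB hy0.2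
  intro u w p
  induction p with
  | nil => intro h1 h2; exact absurd h1 h2
  | @cons a b c hadj p ih =>
    intro h1 h2
    by_cases hb : (b : V) ∈ B
    · exact ih hb h2
    · refine ⟨b, ?_⟩
      rw [frontierF, Finset.mem_filter]
      have hbA : (b : V) ∈ A := by
        have := b.2; simpa using this
      have hadj' : G.Adj (a : V) (b : V) := hadj
      exact ⟨hbA, hb, a, h1, hadj'⟩

lemma pre_spec : ∀ i, i < A.card → pre G α A i ⊆ A ∧ (pre G α A i).card = i + 1 := by
  intro i
  induction i with
  | zero =>
    intro _
    constructor
    · intro x hx; simp only [pre, Finset.mem_singleton] at hx; subst hx; exact hA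
    · simp [pre]
  | succ i ih =>
    intro h
    obtain ⟨hsub, hcard⟩ := ih (by omega)
    have hne : (A \ pre G α A i).Nonempty := by
      rw [Finset.sdiff_nonempty]
      intro hle
      have := Finset.card_le_card hle
      omega
    have hf := exists_cross G α A hA hconn hsub (alpha_mem_pre G α A i) hne
    have hmem : nxt G α A (pre G α A i) ∈ frontierF G A (pre G α A i) := by
      rw [nxt, dif_pos hf]; exact Finset.min'_mem _ hf
    rw [frontierF, Finset.mem_filter] at hmem
    constructor
    · rw [pre]
      exact Finset.insert_subset hmem.1 hsub
    · rw [pre, Finset.card_insert_of_notMem hmem.2.1, hcard]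

lemma frontier_nonempty (i : ℕ) (h : i + 1 < A.card) :
    (frontierF G A (pre G α A i)).Nonempty := by
  obtain ⟨hsub, hcard⟩ := pre_spec G α A hA hconn i (by omega)
  apply exists_cross G α A hA hconn hsub (alpha_mem_pre G α A i)
  rw [Finset.sdiff_nonempty]
  intro hle
  have := Finset.card_le_card hle
  omega

lemma sq_mem_frontier (i : ℕ) (h : i + 1 < A.card) :
    CCS.sq G α A (i+1) ∈ frontierF G A (pre G α A i) := by
  have hf := frontier_nonempty G α A hA hconn i h
  show nxt G α A (pre G α A i) ∈ _
  rw [nxt, dif_pos hf]; exact Finset.min'_mem _ hf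

lemma pre_last : pre G α A (A.card - 1) = A := by
  have hpos : 0 < A.card := Finset.card_pos.mpr ⟨α, hA⟩
  obtain ⟨hsub, hcard⟩ := pre_spec G α A hA hconn (A.card - 1) (by omega)
  apply Finset.eq_of_subset_of_card_le hsub
  omega

lemma A_eq_image : A = (range A.card).image (CCS.sq G α A) := by
  conv_lhs => rw [← pre_last G α A hA hconn]
  rw [pre_eq_image]
  congr 1
  congr 1
  have hpos : 0 < A.card := Finset.card_pos.mpr ⟨α, hA⟩
  omega

lemma sq_mem_A (j : ℕ) (h : j < A.card) : CCS.sq G α A j ∈ A := by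
  have h2 := A_eq_image G α A hA hconn
  have h3 : CCS.sq G α A j ∈ (range A.card).image (CCS.sq G α A) :=
    Finset.mem_image_of_mem _ (Finset.mem_range.mpr h)
  rwa [← h2] at h3

lemma sq_ne (i j : ℕ) (hij : i < j) (hj : j < A.card) :
    CCS.sq G α A i ≠ CCS.sq G α A j := by
  obtain ⟨m, rfl⟩ : ∃ m, j = m + 1 := ⟨j - 1, by omega⟩
  have hmem := sq_mem_frontier G α A hA hconn m hj
  rw [frontierF, Finset.mem_filter] at hmem
  intro heq
  apply hmem.2.1
  rw [← heq, pre_eq_image]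
  exact Finset.mem_image_of_mem _ (Finset.mem_range.mpr (by omega))

lemma sq_inj (i j : ℕ) (hi : i < A.card) (hj : j < A.card)
    (heq : CCS.sq G α A i = CCS.sq G α A j) : i = j := by
  rcases lt_trichotomy i j with h | h | h
  · exact absurd heq (sq_ne G α A hA hconn i j h hj)
  · exact h
  · exact absurd heq.symm (sq_ne G α A hA hconn j i h hi)

lemma exists_parent (j : ℕ) (h1 : 1 ≤ j) (h2 : j < A.card) :
    ∃ i < j, G.Adj (CCS.sq G α A i) (CCS.sq G α A j) := by
  obtain ⟨m, rfl⟩ : ∃ m, j = m + 1 := ⟨j - 1, by omega⟩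
  have hmem := sq_mem_frontier G α A hA hconn m h2
  rw [frontierF, Finset.mem_filter] at hmem
  obtain ⟨x, hx, hadj⟩ := hmem.2.2
  rw [pre_eq_image] at hx
  obtain ⟨i, hi, rfl⟩ := Finset.mem_image.mp hx
  exact ⟨i, by simpa using hi, hadj⟩

end Conn

def codeP (s i j p : ℕ) : Prop :=
  j < s ∧ i < j ∧ G.Adj (CCS.sq G α A i) (CCS.sq G α A j) ∧
  (∀ i' < i, ¬ G.Adj (CCS.sq G α A i') (CCS.sq G α A j)) ∧
  port G (CCS.sq G α A i) (CCS.sq G α A j) = p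

open Classical in
noncomputable def code (v s : ℕ) : Finset (Fin s × Fin v) :=
  univ.filter (fun q => ∃ j, codeP G α A s q.1.val j q.2.val)

open Classical in
lemma mem_code {v s : ℕ} {q : Fin s × Fin v} :
    q ∈ code G α A v s ↔ ∃ j, codeP G α A s q.1.val j q.2.val := by
  simp [code]

open Classical in
noncomputable def pidx (j : ℕ) : ℕ :=
  if h : ∃ i, G.Adj (CCS.sq G α A i) (CCS.sq G α A j) then Nat.find h else 0

lemma codeP_i_unique {s i i' j p p' : ℕ} (h : codeP G α A s i j p)
    (h' : codeP G α A s i' j p') : i = i' := by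
  rcases lt_trichotomy i i' with hlt | he | hlt
  · exact absurd h.2.2.1 (h'.2.2.2.1 i hlt)
  · exact he
  · exact absurd h'.2.2.1 (h.2.2.2.1 i' hlt)

section Conn2
variable (hA : α ∈ A) (hconn : (G.induce (A : Set V)).Connected)
include hA hconn

lemma codeP_j_unique {s i j j' p : ℕ} (hcard : A.card = s)
    (h : codeP G α A s i j p) (h' : codeP G α A s i j' p) : j = j' := by
  have h1 : CCS.sq G α A j ∈ G.neighborFinset (CCS.sq G α A i) :=
    (SimpleGraph.mem_neighborFinset _ _ _).mpr h.2.2.1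
  have h2 : CCS.sq G α A j' ∈ G.neighborFinset (CCS.sq G α A i) :=
    (SimpleGraph.mem_neighborFinset _ _ _).mpr h'.2.2.1
  have h3 : CCS.sq G α A j = CCS.sq G α A j' :=
    port_inj G h1 h2 (h.2.2.2.2.trans h'.2.2.2.2.symm)
  have hj : j < A.card := by rw [hcard]; exact h.1
  have hj' : j' < A.card := by rw [hcard]; exact h'.1
  exact sq_inj G α A hA hconn j j' hj hj' h3

lemma pidx_spec (j : ℕ) (h1 : 1 ≤ j) (h2 : j < A.card) :
    pidx G α A j < j ∧ G.Adj (CCS.sq G α A (pidx G α A j)) (CCS.sq G α A j) ∧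
      ∀ i' < pidx G α A j, ¬ G.Adj (CCS.sq G α A i') (CCS.sq G α A j) := by
  classical
  obtain ⟨i0, hi0, hadj0⟩ := exists_parent G α A hA hconn j h1 h2
  have hex : ∃ i, G.Adj (CCS.sq G α A i) (CCS.sq G α A j) := ⟨i0, hadj0⟩
  rw [pidx, dif_pos hex]
  exact ⟨lt_of_le_of_lt (Nat.find_le hadj0) hi0, Nat.find_spec hex,
    fun i' hi' => Nat.find_min hex hi'⟩

lemma pidx_le {i j : ℕ} (hadj : G.Adj (CCS.sq G α A i) (CCS.sq G α A j)) :
    pidx G α A j ≤ i := by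
  classical
  have hex : ∃ i, G.Adj (CCS.sq G α A i) (CCS.sq G α A j) := ⟨i, hadj⟩
  rw [pidx, dif_pos hex]
  exact Nat.find_le hadj

lemma codeP_pidx {s : ℕ} (hcard : A.card = s) (j : ℕ) (h1 : 1 ≤ j) (h2 : j < s) :
    codeP G α A s (pidx G α A j) j
      (port G (CCS.sq G α A (pidx G α A j)) (CCS.sq G α A j)) := by
  obtain ⟨ha, hb, hc⟩ := pidx_spec G α A hA hconn j h1 (by omega)
  exact ⟨h2, ha, hb, hc, rfl⟩


lemma card_code {v s : ℕ} (hcard : A.card = s) (hdeg : ∀ x : V, G.degree x ≤ v) :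
    (code G α A v s).card = s - 1 := by
  have h := Finset.card_bij
    (s := Ico 1 s) (t := code G α A v s)
    (i := fun j hj =>
      ((⟨pidx G α A j, by
          rw [Finset.mem_Ico] at hj
          have := (pidx_spec G α A hA hconn j hj.1 (by omega)).1
          omega⟩ : Fin s),
       (⟨port G (CCS.sq G α A (pidx G α A j)) (CCS.sq G α A j), by
          rw [Finset.mem_Ico] at hj
          have hadj := (pidx_spec G α A hA hconn j hj.1 (by omega)).2.1
          exact port_lt G ((SimpleGraph.mem_neighborFinset _ _ _).mpr hadj) (hdeg _)⟩ : Fin v)))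
    ?_ ?_ ?_
  · rw [← h, Nat.card_Ico]
  · intro j hj
    rw [Finset.mem_Ico] at hj
    rw [mem_code]
    exact ⟨j, codeP_pidx G α A hA hconn hcard j hj.1 hj.2⟩
  · intro j1 h1 j2 h2 heq
    rw [Finset.mem_Ico] at h1 h2
    obtain ⟨he1, he2⟩ := Prod.mk.injEq .. ▸ heq
    have hi : pidx G α A j1 = pidx G α A j2 := by
      have := congrArg Fin.val he1; simpa using this
    have hp : port G (CCS.sq G α A (pidx G α A j1)) (CCS.sq G α A j1)
        = port G (CCS.sq G α A (pidx G α A j2)) (CCS.sq G α A j2) := by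
      have := congrArg Fin.val he2; simpa using this
    have c1 := codeP_pidx G α A hA hconn hcard j1 h1.1 h1.2
    have c2 := codeP_pidx G α A hA hconn hcard j2 h2.1 h2.2
    rw [hi] at hp c1
    rw [hp] at c1
    exact codeP_j_unique G α A hA hconn hcard c1 c2
  · intro q hq
    rw [mem_code] at hq
    obtain ⟨j, hcp⟩ := hq
    have hj1 : 1 ≤ j := by have := hcp.2.1; omega
    have hj2 : j < s := hcp.1
    refine ⟨j, Finset.mem_Ico.mpr ⟨hj1, hj2⟩, ?_⟩
    have c1 := codeP_pidx G α A hA hconn hcard j hj1 hj2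
    have hieq : pidx G α A j = q.1.val := codeP_i_unique G α A c1 hcp
    have hpeq : port G (CCS.sq G α A (pidx G α A j)) (CCS.sq G α A j) = q.2.val := by
      rw [hieq]; exact hcp.2.2.2.2
    ext
    · simpa using hieq
    · simpa using hpeq

lemma frontier_eq_decode {v s : ℕ} (hcard : A.card = s) (hdeg : ∀ x : V, G.degree x ≤ v)
    (k : ℕ) (hk : k + 1 < s) :
    frontierF G A (pre G α A k) =
      (((code G α A v s).filter (fun q => q.1.val ≤ k)).image
        (fun q => unport G (CCS.sq G α A q.1.val) q.2.val)) \ (pre G α A k) := by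
  ext y
  simp only [frontierF, Finset.mem_filter, Finset.mem_sdiff, Finset.mem_image]
  constructor
  · rintro ⟨hyA, hyn, x, hx, hadj⟩
    refine ⟨?_, hyn⟩
    rw [pre_eq_image] at hx
    obtain ⟨i, hi, rfl⟩ := Finset.mem_image.mp hx
    rw [Finset.mem_range] at hi
    have hyA' : y ∈ (range A.card).image (CCS.sq G α A) := by
      rw [← A_eq_image G α A hA hconn]; exact hyA
    obtain ⟨j, hjr, rfl⟩ := Finset.mem_image.mp hyA'
    rw [Finset.mem_range, hcard] at hjr
    have hj1 : 1 ≤ j := by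
      rcases Nat.eq_zero_or_pos j with h0 | h1
      · exfalso; apply hyn
        rw [pre_eq_image]
        exact Finset.mem_image_of_mem _ (Finset.mem_range.mpr (by omega))
      · exact h1
    have hple : pidx G α A j ≤ i := pidx_le G α A hA hconn hadj
    have hspec := pidx_spec G α A hA hconn j hj1 (by omega)
    refine ⟨(⟨pidx G α A j, by omega⟩,
      ⟨port G (CCS.sq G α A (pidx G α A j)) (CCS.sq G α A j),
        port_lt G ((SimpleGraph.mem_neighborFinset _ _ _).mpr hspec.2.1) (hdeg _)⟩), ?_, ?_⟩
    · constructor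
      · rw [mem_code]
        exact ⟨j, codeP_pidx G α A hA hconn hcard j hj1 hjr⟩
      · simpa using le_trans hple (by omega)
    · exact unport_port G ((SimpleGraph.mem_neighborFinset _ _ _).mpr hspec.2.1)
  · rintro ⟨⟨q, hq, rfl⟩, hyn⟩
    obtain ⟨hqc, hqk⟩ := hq
    rw [mem_code] at hqc
    obtain ⟨j, hcp⟩ := hqc
    have hadj := hcp.2.2.1
    have hun : unport G (CCS.sq G α A q.1.val) q.2.val = CCS.sq G α A j := by
      rw [← hcp.2.2.2.2]
      exact unport_port G ((SimpleGraph.mem_neighborFinset _ _ _).mpr hadj)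
    rw [hun] at hyn ⊢
    refine ⟨sq_mem_A G α A hA hconn j (by rw [hcard]; exact hcp.1), hyn, ?_⟩
    refine ⟨CCS.sq G α A q.1.val, ?_, hadj⟩
    rw [pre_eq_image]
    exact Finset.mem_image_of_mem _ (Finset.mem_range.mpr (by omega))

end Conn2


lemma min'_congr {s t : Finset V} (h : s = t) (hs : s.Nonempty) (ht : t.Nonempty) :
    s.min' hs = t.min' ht := by subst h; rfl

lemma code_inj {v s : ℕ} (hdeg : ∀ x : V, G.degree x ≤ v) {S T : Finset V}
    (hS1 : α ∈ S) (hS2 : (G.induce (S : Set V)).Connected) (hS3 : S.card = s)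
    (hT1 : α ∈ T) (hT2 : (G.induce (T : Set V)).Connected) (hT3 : T.card = s)
    (h : code G α S v s = code G α T v s) : S = T := by
  have hseq : ∀ i, i < s → CCS.sq G α S i = CCS.sq G α T i := by
    intro i
    induction i using Nat.strong_induction_on with
    | _ i ih =>
      cases i with
      | zero => intro _; rfl
      | succ k =>
        intro hk
        have hpre : pre G α S k = pre G α T k := by
          rw [pre_eq_image, pre_eq_image]
          apply Finset.image_congr
          intro x hx
          simp only [Finset.coe_range, Set.mem_Iio] at hx
          exact ih x (by omega) (by omega)
        have hfr : frontierF G S (pre G α S k) = frontierF G T (pre G α T k) := by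
          rw [frontier_eq_decode G α S hS1 hS2 hS3 hdeg k hk,
              frontier_eq_decode G α T hT1 hT2 hT3 hdeg k hk, h, hpre]
          have himg : ((code G α T v s).filter (fun q => q.1.val ≤ k)).image
                (fun q => unport G (CCS.sq G α S q.1.val) q.2.val)
              = ((code G α T v s).filter (fun q => q.1.val ≤ k)).image
                (fun q => unport G (CCS.sq G α T q.1.val) q.2.val) := by
            apply Finset.image_congr
            intro q hq
            simp only [Finset.mem_coe, Finset.mem_filter] at hq
            have hq1 : (q.1.val : ℕ) < s := q.1.isLt
            show unport G (CCS.sq G α S q.1.val) q.2.val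
              = unport G (CCS.sq G α T q.1.val) q.2.val
            rw [ih q.1.val (by omega) (by omega)]
          rw [himg]
        have hne : (frontierF G S (pre G α S k)).Nonempty :=
          frontier_nonempty G α S hS1 hS2 k (by rw [hS3]; exact hk)
        show nxt G α S (pre G α S k) = nxt G α T (pre G α T k)
        rw [nxt, nxt, dif_pos hne, dif_pos (hfr ▸ hne)]
        exact min'_congr hfr hne (hfr ▸ hne)
  have hS : S = (range s).image (CCS.sq G α S) := by
    have h2 := A_eq_image G α S hS1 hS2
    rwa [hS3] at h2
  have hT : T = (range s).image (CCS.sq G α T) := by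
    have h2 := A_eq_image G α T hT1 hT2
    rwa [hT3] at h2
  rw [hS, hT]
  apply Finset.image_congr
  intro x hx
  simp only [Finset.coe_range, Set.mem_Iio] at hx
  exact hseq x hx

end CCS

theorem counting_conn_main {V : Type*} [Fintype V] [DecidableEq V]
    (G : SimpleGraph V) [DecidableRel G.Adj]
    (v : ℕ) (hv : 1 ≤ v) (hdeg : ∀ x : V, G.degree x ≤ v)
    (α : V) (s : ℕ) (hs : 1 ≤ s) :
    (Nat.card {A : Finset V // α ∈ A ∧ A.card = s ∧ (G.induce (A : Set V)).Connected} : ℝ)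
      ≤ (v * Real.exp 1) ^ (s - 1) := by
  letI : LinearOrder V := LinearOrder.lift' (Fintype.equivFin V) (Fintype.equivFin V).injective
  set F : {A : Finset V // α ∈ A ∧ A.card = s ∧ (G.induce (A : Set V)).Connected} →
      {T : Finset (Fin s × Fin v) // T.card = s - 1} :=
    fun a => ⟨CCS.code G α a.1 v s,
      CCS.card_code G α a.1 a.2.1 a.2.2.2 a.2.2.1 hdeg⟩ with hF
  have hinj : Function.Injective F := by
    rintro ⟨A, hA1, hA2, hA3⟩ ⟨B, hB1, hB2, hB3⟩ hFeq
    have heq : CCS.code G α A v s = CCS.code G α B v s := by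
      have := congrArg Subtype.val hFeq
      simpa [hF] using this
    exact Subtype.ext (CCS.code_inj G α hdeg hA1 hA3 hA2 hB1 hB3 hB2 heq)
  have h1 := Nat.card_le_card_of_injective F hinj
  have h2 : Nat.card {T : Finset (Fin s × Fin v) // T.card = s - 1} = (s * v).choose (s - 1) := by
    rw [Nat.card_eq_fintype_card, Fintype.card_subtype]
    have he : (univ.filter fun T : Finset (Fin s × Fin v) => T.card = s - 1)
        = Finset.powersetCard (s - 1) univ := by
      ext T
      simp [Finset.mem_powersetCard]
    rw [he, Finset.card_powersetCard]
    simp [Fintype.card_prod]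
  rw [h2] at h1
  calc (Nat.card {A : Finset V // α ∈ A ∧ A.card = s ∧ (G.induce (A : Set V)).Connected} : ℝ)
      ≤ ((s * v).choose (s - 1) : ℝ) := by exact_mod_cast h1
    _ ≤ ((v : ℝ) * Real.exp 1) ^ (s - 1) := chooseReal v s hs

/-- Counting lemma: in a graph of max degree ≤ v, the number of connected
vertex sets of size `s` containing a fixed vertex `α` is at most `(v·e)^(s-1)`. -/
theorem counting_connected_sets {V : Type*} [Fintype V] [DecidableEq V]
    (G : SimpleGraph V) [DecidableRel G.Adj]
    (v : ℕ) (hv : 1 ≤ v) (hdeg : ∀ x : V, G.degree x ≤ v)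
    (α : V) (s : ℕ) (hs : 1 ≤ s) :
    (Nat.card {A : Finset V // α ∈ A ∧ A.card = s ∧ (G.induce (A : Set V)).Connected} : ℝ)
      ≤ (v * Real.exp 1) ^ (s - 1) :=
  counting_conn_main G v hv hdeg α s hs
end

section
/- In the single-shot patch growth of a surface code from distance d₁ to distance d ≥ d₁, any Z-type logical error chain that is undetected by the deterministic stabilizers in the grown region must have weight at least d₁; formally, modeling the grown code region as a d × d grid where stabilizers outside a d₁ × d₁ corner are deterministic, a path of errors crossing the code from one Z-boundary to the opposite one while avoiding all deterministic stabilizer violations must contain at least d₁ qubits within the original d₁ × d₁ patch. -/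
/-- Single-shot patch growth keeps distance d₁: model the grown code as a d×d grid
with the original patch the d₁×d₁ corner subgrid {(x,y) | d-d₁ ≤ x, d-d₁ ≤ y}.
A logical error is a path of grid-adjacent qubits crossing from the left boundary
(column 0) to the right boundary (column d-1); avoiding all deterministic stabilizer
violations forces any path vertex in the columns of the grown strip to lie inside the
corner patch. Then the path contains at least d₁ distinct qubits within the patch. -/
theorem single_shot_patch_growth_distance
    (d d₁ : ℕ) (h1 : 1 ≤ d₁) (hdd : d₁ ≤ d) (n : ℕ)
    (P : Fin (n + 1) → Fin d × Fin d)
    (hadj : ∀ i : Fin n,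
      ((P i.castSucc).1.val : ℤ) - (P i.succ).1.val ≤ 1 ∧
      ((P i.succ).1.val : ℤ) - (P i.castSucc).1.val ≤ 1)
    (hstart : (P 0).1.val = 0)
    (hend : (P (Fin.last n)).1.val = d - 1)
    (hdetect : ∀ i : Fin (n + 1),
      d - d₁ ≤ (P i).1.val → d - d₁ ≤ (P i).2.val) :
    d₁ ≤ ((Finset.univ.image P).filter
      (fun x : Fin d × Fin d => d - d₁ ≤ x.1.val ∧ d - d₁ ≤ x.2.val)).card := by
  classical
  -- g k = column of the k-th vertex (clamped at n)
  set g : ℕ → ℕ := fun k => (P ⟨min k n, by omega⟩).1.val with hg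
  have hstep : ∀ k, (g (k+1) : ℤ) - g k ≤ 1 ∧ (g k : ℤ) - g (k+1) ≤ 1 := by
    intro k
    by_cases hk : k < n
    · have h := hadj ⟨k, hk⟩
      have h1' : (⟨min k n, by omega⟩ : Fin (n+1)) = (⟨k, hk⟩ : Fin n).castSucc := by
        ext; simp [Fin.castSucc, Nat.min_eq_left hk.le]
      have h2' : (⟨min (k+1) n, by omega⟩ : Fin (n+1)) = (⟨k, hk⟩ : Fin n).succ := by
        ext; simp [Fin.succ, Nat.min_eq_left (by omega : k + 1 ≤ n)]
      simp only [hg, h1', h2']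
      exact ⟨h.2, h.1⟩
    · have : min k n = min (k+1) n := by omega
      simp [hg, this]
  have hg0 : g 0 = 0 := by simpa [hg] using hstart
  have hgn : g n = d - 1 := by
    have : (⟨min n n, by omega⟩ : Fin (n+1)) = Fin.last n := by ext; simp
    have h' : (P ⟨min n n, by omega⟩).1.val = d - 1 := by rw [this]; exact hend
    exact h'
  -- discrete IVT: every column c ≤ d-1 is visited
  have key : ∀ c : ℕ, c ≤ d - 1 → ∃ k ≤ n, g k = c := by
    intro c hc
    have hex : ∃ k, c ≤ g k := ⟨n, by omega⟩
    have hk : c ≤ g (Nat.find hex) := Nat.find_spec hex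
    have hkn : Nat.find hex ≤ n := Nat.find_min' hex (by omega)
    refine ⟨Nat.find hex, hkn, ?_⟩
    rcases Nat.eq_zero_or_pos (Nat.find hex) with h0 | hpos
    · rw [h0] at hk ⊢; omega
    · obtain ⟨m, hm⟩ : ∃ m, Nat.find hex = m + 1 :=
        ⟨_, (Nat.succ_pred_eq_of_pos hpos).symm⟩
      have hmlt : ¬ c ≤ g m := Nat.find_min hex (by omega)
      have := (hstep m).1
      rw [hm] at hk ⊢
      omega
  -- each column in [d-d₁, d-1] contributes a distinct point of the patch
  have hsub : Finset.Icc (d - d₁) (d - 1) ⊆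
      (((Finset.univ.image P).filter
        (fun x : Fin d × Fin d => d - d₁ ≤ x.1.val ∧ d - d₁ ≤ x.2.val)).image
        (fun x : Fin d × Fin d => x.1.val)) := by
    intro c hc
    rw [Finset.mem_Icc] at hc
    obtain ⟨k, hkn, hgk⟩ := key c hc.2
    have hgk' : (P ⟨min k n, by omega⟩).1.val = c := hgk
    refine Finset.mem_image.mpr ⟨P ⟨min k n, by omega⟩, ?_, ?_⟩
    · refine Finset.mem_filter.mpr ⟨Finset.mem_image_of_mem _ (Finset.mem_univ _), ?_, ?_⟩
      · rw [hgk']; exact hc.1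
      · exact hdetect _ (by rw [hgk']; exact hc.1)
    · exact hgk'
  have h2 := Finset.card_le_card hsub
  have h3 := Finset.card_image_le (s := ((Finset.univ.image P).filter
        (fun x : Fin d × Fin d => d - d₁ ≤ x.1.val ∧ d - d₁ ≤ x.2.val)))
        (f := fun x : Fin d × Fin d => x.1.val)
  rw [Nat.card_Icc] at h2
  omega
end
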